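/- arXiv:1401.2772 — 2 statements merged into one kernel-verified Lean document; each statement's English description precedes it below -/
import Mathlib

section
/- Let p ≥ 2 and let a, b ∈ ℝⁿ. Then 2^{2−p} |a − b|^p ≤ ( |a|^{p−2} a − |b|^{p−2} b ) · (a − b), where · denotes the Euclidean inner product and |·| the Euclidean norm. -/
open Real
open scoped RealInnerProductSpace

private lemma convex_pow_aux {r A B : ℝ} (hr : 1 ≤ r) (hA : 0 ≤ A) (hB : 0 ≤ B) :
    (A + B) ^ r ≤ 2 ^ (r - 1) * (A ^ r + B ^ r) := by
  have h := NNReal.rpow_add_le_mul_rpow_add_rpow ⟨A, hA⟩ ⟨B, hB⟩ hr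
  have h2 := NNReal.coe_le_coe.2 h
  push_cast at h2
  convert h2 using 3
  all_goals rfl

private lemma key_scalar {q A B D : ℝ} (hq : 0 ≤ q) (hA : 0 ≤ A) (hB : 0 ≤ B)
    (hD : 0 ≤ D) (hBA : B ≤ A) (hDle : D ≤ A + B) :
    2 ^ (1 - q) * D ^ (q + 2) ≤ (A ^ q - B ^ q) * (A ^ 2 - B ^ 2) + (A ^ q + B ^ q) * D ^ 2 := by
  have hS : (0:ℝ) ≤ A + B := by linarith
  have hK : 0 ≤ (A ^ q - B ^ q) * (A ^ 2 - B ^ 2) :=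
    mul_nonneg (sub_nonneg.2 (Real.rpow_le_rpow hB hBA hq))
      (sub_nonneg.2 (pow_le_pow_left₀ hB hBA 2))
  have hDsplit : D ^ (q + 2) = D ^ q * D ^ 2 := by
    rw [Real.rpow_add' hD (by linarith), Real.rpow_two]
  rcases le_or_gt ((2:ℝ) ^ (1 - q) * D ^ q) (A ^ q + B ^ q) with h | h
  · have : 2 ^ (1 - q) * D ^ q * D ^ 2 ≤ (A ^ q + B ^ q) * D ^ 2 :=
      mul_le_mul_of_nonneg_right h (sq_nonneg D)
    calc 2 ^ (1 - q) * D ^ (q + 2) = 2 ^ (1 - q) * D ^ q * D ^ 2 := by rw [hDsplit]; ring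
      _ ≤ (A ^ q + B ^ q) * D ^ 2 := this
      _ ≤ _ := le_add_of_nonneg_left hK
  · -- bracket positive case
    have h2pos : (0:ℝ) ≤ (2:ℝ) ^ (1 - q) := Real.rpow_nonneg (by norm_num) _
    have hmono : (2:ℝ) ^ (1 - q) * D ^ q ≤ 2 ^ (1 - q) * (A + B) ^ q :=
      mul_le_mul_of_nonneg_left (Real.rpow_le_rpow hD hDle hq) h2pos
    have step1 : D ^ 2 * (2 ^ (1 - q) * D ^ q - (A ^ q + B ^ q)) ≤
        (A + B) ^ 2 * (2 ^ (1 - q) * (A + B) ^ q - (A ^ q + B ^ q)) :=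
      mul_le_mul (pow_le_pow_left₀ hD hDle 2) (by linarith) (by linarith) (sq_nonneg _)
    -- step2 : the value at D = A + B is at most K
    have conv : (A + B) ^ (q + 1) ≤ 2 ^ q * (A ^ (q + 1) + B ^ (q + 1)) := by
      have := convex_pow_aux (r := q + 1) (by linarith) hA hB
      simpa using this
    have eA : A ^ (q + 1) = A ^ q * A := by
      rw [Real.rpow_add' hA (by linarith), Real.rpow_one]
    have eB : B ^ (q + 1) = B ^ q * B := by
      rw [Real.rpow_add' hB (by linarith), Real.rpow_one]
    have eS : (A + B) ^ (q + 2) = (A + B) ^ q * (A + B) ^ 2 := by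
      rw [Real.rpow_add' hS (by linarith), Real.rpow_two]
    have eS1 : (A + B) ^ (q + 2) = (A + B) ^ (q + 1) * (A + B) := by
      rw [show q + 2 = (q + 1) + 1 by ring, Real.rpow_add' hS (by linarith), Real.rpow_one]
    have e5 : (2:ℝ) ^ (1 - q) * 2 ^ q = 2 := by
      rw [← Real.rpow_add (by norm_num)]; norm_num
    have h6 : 2 ^ (1 - q) * ((A + B) ^ q * (A + B) ^ 2) ≤
        2 * ((A + B) * (A ^ q * A + B ^ q * B)) := by
      have hmul := mul_le_mul_of_nonneg_left conv (mul_nonneg h2pos hS)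
      calc 2 ^ (1 - q) * ((A + B) ^ q * (A + B) ^ 2)
          = (2 ^ (1 - q) * (A + B)) * (A + B) ^ (q + 1) := by rw [← eS, eS1]; ring
        _ ≤ (2 ^ (1 - q) * (A + B)) * (2 ^ q * (A ^ (q + 1) + B ^ (q + 1))) := hmul
        _ = 2 * ((A + B) * (A ^ q * A + B ^ q * B)) := by
            rw [eA, eB]; linear_combination ((A + B) * (A ^ q * A + B ^ q * B)) * e5
    have step2 : (A + B) ^ 2 * (2 ^ (1 - q) * (A + B) ^ q - (A ^ q + B ^ q)) ≤
        (A ^ q - B ^ q) * (A ^ 2 - B ^ 2) := by nlinarith [h6]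
    have final : 2 ^ (1 - q) * D ^ (q + 2) - (A ^ q + B ^ q) * D ^ 2 =
        D ^ 2 * (2 ^ (1 - q) * D ^ q - (A ^ q + B ^ q)) := by rw [hDsplit]; ring
    linarith [step1, step2]

/-- Strong monotonicity of the map `a ↦ |a|^{p−2} a` on `ℝⁿ` for `p ≥ 2`:
`2^{2−p} |a − b|^p ≤ (|a|^{p−2} a − |b|^{p−2} b) · (a − b)`. -/
theorem strong_monotonicity (n : ℕ) (p : ℝ) (hp : 2 ≤ p)
    (a b : EuclideanSpace ℝ (Fin n)) :
    (2 : ℝ) ^ (2 - p) * ‖a - b‖ ^ p ≤ ⟪‖a‖ ^ (p - 2) • a - ‖b‖ ^ (p - 2) • b, a - b⟫ := by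
  set q : ℝ := p - 2 with hqdef
  have hq : 0 ≤ q := by simp [hqdef]; linarith
  set A := ‖a‖ with hAdef
  set B := ‖b‖ with hBdef
  set D := ‖a - b‖ with hDdef
  have hA : 0 ≤ A := norm_nonneg a
  have hB : 0 ≤ B := norm_nonneg b
  have hD : 0 ≤ D := norm_nonneg _
  have hDle : D ≤ A + B := norm_sub_le a b
  have expand : ⟪A ^ q • a - B ^ q • b, a - b⟫ =
      A ^ q * A ^ 2 + B ^ q * B ^ 2 - (A ^ q + B ^ q) * ⟪a, b⟫ := by
    rw [inner_sub_left, real_inner_smul_left, real_inner_smul_left, inner_sub_right,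
      inner_sub_right, real_inner_self_eq_norm_sq, real_inner_self_eq_norm_sq,
      real_inner_comm b a]
    ring
  have hnorm : D ^ 2 = A ^ 2 - 2 * ⟪a, b⟫ + B ^ 2 := by
    rw [hDdef, hAdef, hBdef, @norm_sub_sq_real]
  have htwo : 2 * ⟪A ^ q • a - B ^ q • b, a - b⟫ =
      (A ^ q - B ^ q) * (A ^ 2 - B ^ 2) + (A ^ q + B ^ q) * D ^ 2 := by
    linear_combination 2 * expand - (A ^ q + B ^ q) * hnorm
  have hkey : 2 ^ (1 - q) * D ^ (q + 2) ≤
      (A ^ q - B ^ q) * (A ^ 2 - B ^ 2) + (A ^ q + B ^ q) * D ^ 2 := by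
    rcases le_total B A with hBA | hAB
    · exact key_scalar hq hA hB hD hBA hDle
    · have := key_scalar hq hB hA hD hAB (by linarith)
      nlinarith [this]
  have hDp : D ^ (q + 2) = D ^ p := by norm_num [hqdef]
  have h2 : (2:ℝ) ^ (1 - q) = 2 * 2 ^ (2 - p) := by
    rw [show (1 - q) = 1 + (2 - p) by simp [hqdef]; ring, Real.rpow_add (by norm_num),
      Real.rpow_one]
  rw [hDp, h2] at hkey
  linarith [hkey, htwo]
end

section
/- Let n ≥ 1, p > 2, λ = n(p−2)+p, C > 0 and T > 0, and let B_p be the Barenblatt solution. Then the integrability exponents p − 1 + p/n and p − 1 + 1/(n+1) are sharp: for every q ≥ p − 1 + p/n, ∫_0^T ∫_{ℝⁿ} B_p(x,t)^q dx dt = ∞, and for every q ≥ p − 1 + 1/(n+1), ∫_0^T ∫_{ℝⁿ} |∇_x B_p(x,t)|^q dx dt = ∞. -/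
open MeasureTheory Real Set
open scoped ENNReal

section AuxLemmas

lemma aux_inner {α : Type*} [MeasurableSpace α] (μ : Measure α) {f : α → ℝ} {S : Set α}
    (hS : MeasurableSet S) {c : ℝ} (h : ∀ x ∈ S, c ≤ f x) :
    ENNReal.ofReal c * μ S ≤ ∫⁻ x, ENNReal.ofReal (f x) ∂μ := by
  have hle : ∀ x, S.indicator (fun _ => ENNReal.ofReal c) x ≤ ENNReal.ofReal (f x) := by
    intro x
    by_cases hx : x ∈ S
    · simpa [Set.indicator_of_mem hx] using ENNReal.ofReal_le_ofReal (h x hx)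
    · simp [Set.indicator_of_notMem hx]
  calc ENNReal.ofReal c * μ S
      = ∫⁻ x, S.indicator (fun _ => ENNReal.ofReal c) x ∂μ := by
        rw [lintegral_indicator hS _, setLIntegral_const]
    _ ≤ _ := lintegral_mono hle

lemma aux_rpow_top {c a T : ℝ} (hc : 0 < c) (ha : a ≤ -1) (hT : 0 < T) :
    ∫⁻ t in Set.Ioo (0:ℝ) T, ENNReal.ofReal (c * t ^ a) = ⊤ := by
  have hcont : ContinuousOn (fun t : ℝ => c * t ^ a) (Set.Ioo 0 T) :=
    continuousOn_const.mul (fun t ht =>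
      (Real.continuousAt_rpow_const t a (Or.inl (ne_of_gt ht.1))).continuousWithinAt)
  have hmeas := hcont.aestronglyMeasurable measurableSet_Ioo (μ := volume)
  have hpos : 0 ≤ᵐ[volume.restrict (Set.Ioo (0:ℝ) T)] fun t => c * t ^ a :=
    (ae_restrict_iff' measurableSet_Ioo).2 (ae_of_all _ fun t ht => by
      have := ht.1; positivity)
  by_contra hne
  have hint : IntegrableOn (fun t : ℝ => c * t ^ a) (Set.Ioo 0 T) :=
    (lintegral_ofReal_ne_top_iff_integrable hmeas hpos).1 hne
  have h2 : IntegrableOn (fun t : ℝ => t ^ a) (Set.Ioo 0 T) := by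
    have := hint.const_mul c⁻¹
    simp [← mul_assoc, inv_mul_cancel₀ hc.ne'] at this; exact this
  rw [intervalIntegral.integrableOn_Ioo_rpow_iff hT] at h2
  linarith

lemma aux_outer {T : ℝ} (hT : 0 < T) {c a : ℝ} (hc : 0 < c) (ha : a ≤ -1)
    {W : ℝ≥0∞} (hW : W ≠ 0) {F : ℝ → ℝ≥0∞}
    (h : ∀ t ∈ Set.Ioo (0:ℝ) T, ENNReal.ofReal (c * t ^ a) * W ≤ F t) :
    ∫⁻ t in Set.Ioo (0:ℝ) T, F t = ⊤ := by
  have hcont : ContinuousOn (fun t : ℝ => c * t ^ a) (Set.Ioo 0 T) :=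
    continuousOn_const.mul (fun t ht =>
      (Real.continuousAt_rpow_const t a (Or.inl (ne_of_gt ht.1))).continuousWithinAt)
  have hmeas : AEMeasurable (fun t : ℝ => ENNReal.ofReal (c * t ^ a))
      (volume.restrict (Set.Ioo (0:ℝ) T)) :=
    ENNReal.measurable_ofReal.comp_aemeasurable (hcont.aemeasurable measurableSet_Ioo)
  have h1 : ∫⁻ t in Set.Ioo (0:ℝ) T, ENNReal.ofReal (c * t ^ a) * W
      ≤ ∫⁻ t in Set.Ioo (0:ℝ) T, F t :=
    lintegral_mono_ae ((ae_restrict_iff' measurableSet_Ioo).2 (ae_of_all _ h))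
  rw [lintegral_mul_const'' W hmeas, aux_rpow_top hc ha hT, ENNReal.top_mul hW] at h1
  exact top_le_iff.1 h1

lemma aux_part1 (n : ℕ) (hn : 1 ≤ n) {C T q A b s K m : ℝ}
    (hC : 0 < C) (hT : 0 < T) (hK : 0 < K) (hs : 0 < s) (hm : 0 < m) (hq : 0 < q)
    (he : A * q + b * n ≤ -1) :
    ∫⁻ t in Set.Ioo (0:ℝ) T, ∫⁻ x : EuclideanSpace ℝ (Fin n),
      ENNReal.ofReal ((t ^ A * (max (C - K * (‖x‖ / t ^ b) ^ s) 0) ^ m) ^ q) = ⊤ := by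
  haveI : Nonempty (Fin n) := ⟨⟨0, hn⟩⟩
  haveI : Nontrivial (EuclideanSpace ℝ (Fin n)) := by
    refine ⟨EuclideanSpace.single ⟨0, hn⟩ 1, 0, ?_⟩
    intro h
    simpa using congrArg (fun v => v ⟨0, hn⟩) h
  set W : ℝ≥0∞ := volume (Metric.ball (0 : EuclideanSpace ℝ (Fin n)) 1) with hWdef
  have hW0 : W ≠ 0 := (Metric.measure_ball_pos volume _ one_pos).ne'
  set r : ℝ := (C / (2 * K)) ^ s⁻¹ with hrdef
  have hr0 : 0 < r := Real.rpow_pos_of_pos (by positivity) _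
  have hrs : r ^ s = C / (2 * K) := Real.rpow_inv_rpow (by positivity) hs.ne'
  set c1 : ℝ := (C / 2) ^ m with hc1def
  have hc10 : 0 < c1 := Real.rpow_pos_of_pos (by positivity) _
  refine aux_outer hT (c := c1 ^ q * r ^ n) (a := A * q + b * n) (by positivity) he hW0 ?_
  intro t ht
  obtain ⟨ht0, htT⟩ := ht
  have htb : 0 < t ^ b := Real.rpow_pos_of_pos ht0 _
  have htA : 0 < t ^ A := Real.rpow_pos_of_pos ht0 _
  set R2 : ℝ := r * t ^ b with hR2def
  have hR20 : 0 < R2 := mul_pos hr0 htb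
  have hlow : ∀ x ∈ Metric.ball (0 : EuclideanSpace ℝ (Fin n)) R2,
      (t ^ A * c1) ^ q ≤ (t ^ A * (max (C - K * (‖x‖ / t ^ b) ^ s) 0) ^ m) ^ q := by
    intro x hx
    have hxn : ‖x‖ < R2 := by simpa using mem_ball_zero_iff.1 hx
    have hdiv : ‖x‖ / t ^ b ≤ r := (div_le_iff₀ htb).2 (by linarith)
    have h1 : (‖x‖ / t ^ b) ^ s ≤ r ^ s := Real.rpow_le_rpow (by positivity) hdiv hs.le
    have hKs : K * (‖x‖ / t ^ b) ^ s ≤ C / 2 := by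
      rw [hrs] at h1
      calc K * (‖x‖ / t ^ b) ^ s ≤ K * (C / (2 * K)) := by nlinarith
        _ = C / 2 := by field_simp
    have hmax : C / 2 ≤ max (C - K * (‖x‖ / t ^ b) ^ s) 0 :=
      le_max_iff.2 (Or.inl (by linarith))
    have hBg : t ^ A * c1 ≤ t ^ A * (max (C - K * (‖x‖ / t ^ b) ^ s) 0) ^ m :=
      mul_le_mul_of_nonneg_left (Real.rpow_le_rpow (by positivity) hmax hm.le) htA.le
    exact Real.rpow_le_rpow (by positivity) hBg hq.le
  have hA := aux_inner volume measurableSet_ball hlow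
  rw [Measure.addHaar_ball volume _ hR20.le, finrank_euclideanSpace_fin] at hA
  have eq1 : ENNReal.ofReal ((c1 ^ q * r ^ n) * t ^ (A * q + b * (n:ℝ)))
      = ENNReal.ofReal ((t ^ A * c1) ^ q) * ENNReal.ofReal (R2 ^ n) := by
    rw [← ENNReal.ofReal_mul (by positivity)]
    congr 1
    rw [Real.mul_rpow htA.le hc10.le, ← Real.rpow_natCast R2 n, hR2def,
      Real.mul_rpow hr0.le htb.le, ← Real.rpow_mul ht0.le, ← Real.rpow_mul ht0.le,
      Real.rpow_natCast r n, Real.rpow_add ht0]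
    ring
  calc ENNReal.ofReal ((c1 ^ q * r ^ n) * t ^ (A * q + b * (n:ℝ))) * W
      = ENNReal.ofReal ((t ^ A * c1) ^ q) * (ENNReal.ofReal (R2 ^ n) * W) := by
        rw [eq1]; ring
    _ ≤ _ := by rw [hWdef]; exact hA

lemma aux_part2 (n : ℕ) (hn : 1 ≤ n) {C T q A b s K m : ℝ}
    (hC : 0 < C) (hT : 0 < T) (hK : 0 < K) (hs1 : 1 < s) (hs2 : s ≤ 2)
    (hm1 : 1 < m) (hq : 0 < q)
    (he : (A - b) * q + b * n ≤ -1) :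
    ∫⁻ t in Set.Ioo (0:ℝ) T, ∫⁻ x : EuclideanSpace ℝ (Fin n),
      ENNReal.ofReal
        (‖gradient (fun y => t ^ A * (max (C - K * (‖y‖ / t ^ b) ^ s) 0) ^ m) x‖ ^ q) = ⊤ := by
  have hs0 : 0 < s := lt_trans one_pos hs1
  have hm0 : 0 < m := lt_trans one_pos hm1
  haveI : Nonempty (Fin n) := ⟨⟨0, hn⟩⟩
  haveI : Nontrivial (EuclideanSpace ℝ (Fin n)) := by
    refine ⟨EuclideanSpace.single ⟨0, hn⟩ 1, 0, ?_⟩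
    intro h
    simpa using congrArg (fun v => v ⟨0, hn⟩) h
  set W : ℝ≥0∞ := volume (Metric.ball (0 : EuclideanSpace ℝ (Fin n)) 1) with hWdef
  have hW0 : W ≠ 0 := (Metric.measure_ball_pos volume _ one_pos).ne'
  have hWtop : W ≠ ⊤ := measure_ball_lt_top.ne
  set r : ℝ := (C / (2 * K)) ^ s⁻¹ with hrdef
  have hr0 : 0 < r := Real.rpow_pos_of_pos (by positivity) _
  have hrs : r ^ s = C / (2 * K) := Real.rpow_inv_rpow (by positivity) hs0.ne'
  set c3 : ℝ := K * m * (C / 2) ^ (m - 1) * (s * r ^ (s - 2)) * (r / 2) with hc3def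
  have hc30 : 0 < c3 :=
    mul_pos (mul_pos (mul_pos (mul_pos hK hm0) (Real.rpow_pos_of_pos (half_pos hC) _))
      (mul_pos hs0 (Real.rpow_pos_of_pos hr0 _))) (half_pos hr0)
  set c4 : ℝ := r ^ n - (r / 2) ^ n with hc4def
  have hc40 : 0 < c4 := sub_pos.2 (pow_lt_pow_left₀ (by linarith) (by positivity)
    (Nat.one_le_iff_ne_zero.1 hn))
  refine aux_outer hT (c := c3 ^ q * c4) (a := (A - b) * q + b * n)
    (mul_pos (Real.rpow_pos_of_pos hc30 _) hc40) he hW0 ?_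
  intro t ht
  obtain ⟨ht0, htT⟩ := ht
  have htb : 0 < t ^ b := Real.rpow_pos_of_pos ht0 _
  have htA : 0 < t ^ A := Real.rpow_pos_of_pos ht0 _
  have htbs : 0 < t ^ (b * s) := Real.rpow_pos_of_pos ht0 _
  set R1 : ℝ := r / 2 * t ^ b with hR1def
  set R2 : ℝ := r * t ^ b with hR2def
  have hR10 : 0 < R1 := mul_pos (half_pos hr0) htb
  have hR20 : 0 < R2 := mul_pos hr0 htb
  set K' : ℝ := K / t ^ (b * s) with hK'def
  have hK'0 : 0 < K' := div_pos hK htbs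
  have hKu : ∀ y : EuclideanSpace ℝ (Fin n), K * (‖y‖ / t ^ b) ^ s = K' * ‖y‖ ^ s := by
    intro y
    rw [Real.div_rpow (norm_nonneg y) htb.le, ← Real.rpow_mul ht0.le, hK'def]
    ring
  have hhalf : ∀ y : EuclideanSpace ℝ (Fin n), ‖y‖ < R2 → K * (‖y‖ / t ^ b) ^ s ≤ C / 2 := by
    intro y hy
    have hdiv : ‖y‖ / t ^ b ≤ r := (div_le_iff₀ htb).2 (by linarith)
    have h1 : (‖y‖ / t ^ b) ^ s ≤ r ^ s := Real.rpow_le_rpow (by positivity) hdiv hs0.le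
    rw [hrs] at h1
    calc K * (‖y‖ / t ^ b) ^ s ≤ K * (C / (2 * K)) := by nlinarith
      _ = C / 2 := by field_simp
  set S : Set (EuclideanSpace ℝ (Fin n)) :=
    Metric.ball 0 R2 \ Metric.closedBall 0 R1 with hSdef
  have hSm : MeasurableSet S := measurableSet_ball.diff measurableSet_closedBall
  -- pointwise gradient lower bound
  have hlow : ∀ x ∈ S, (c3 * t ^ (A - b)) ^ q ≤
      ‖gradient (fun y => t ^ A * (max (C - K * (‖y‖ / t ^ b) ^ s) 0) ^ m) x‖ ^ q := by
    intro x hx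
    have hx2 : ‖x‖ < R2 := mem_ball_zero_iff.1 hx.1
    have hx1 : R1 < ‖x‖ := not_le.1 (fun h => hx.2 (mem_closedBall_zero_iff.2 h))
    have hx0 : 0 < ‖x‖ := lt_trans hR10 hx1
    have hval2 : K' * ‖x‖ ^ s ≤ C / 2 := by rw [← hKu x]; exact hhalf x hx2
    have hval0 : 0 < C - K' * ‖x‖ ^ s := by linarith
    have hval : C / 2 ≤ C - K' * ‖x‖ ^ s := by linarith
    have hG : HasDerivAt (fun u : ℝ => t ^ A * (C - K' * u) ^ m)
        (t ^ A * (-(K' * 1) * m * (C - K' * ‖x‖ ^ s) ^ (m - 1))) (‖x‖ ^ s) :=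
      ((((hasDerivAt_id (‖x‖ ^ s)).const_mul K').const_sub C).rpow_const
        (Or.inl hval0.ne')).const_mul (t ^ A)
    have hN := hasFDerivAt_norm_rpow x hs1
    have hcomp : HasFDerivAt (fun y : EuclideanSpace ℝ (Fin n) => t ^ A * (C - K' * ‖y‖ ^ s) ^ m)
        ((t ^ A * (-(K' * 1) * m * (C - K' * ‖x‖ ^ s) ^ (m - 1))) •
          ((s * ‖x‖ ^ (s - 2)) • innerSL ℝ x)) x := by
        have := hG.comp_hasFDerivAt x hN; exact this
    have heq : (fun y : EuclideanSpace ℝ (Fin n) =>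
        t ^ A * (max (C - K * (‖y‖ / t ^ b) ^ s) 0) ^ m)
        =ᶠ[nhds x] (fun y => t ^ A * (C - K' * ‖y‖ ^ s) ^ m) := by
      filter_upwards [Metric.isOpen_ball.mem_nhds (mem_ball_zero_iff.2 hx2)] with y hy
      have hy2 : ‖y‖ < R2 := mem_ball_zero_iff.1 hy
      have h2 : K' * ‖y‖ ^ s ≤ C / 2 := (hKu y) ▸ hhalf y hy2
      rw [hKu y, max_eq_left (by linarith)]
    have hfd := hcomp.congr_of_eventuallyEq heq
    have hgrad := hfd.hasGradientAt
    rw [hgrad.gradient, LinearIsometryEquiv.norm_map, norm_smul, norm_smul, innerSL_apply_norm]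
    have habs1 : ‖t ^ A * (-(K' * 1) * m * (C - K' * ‖x‖ ^ s) ^ (m - 1))‖
        = t ^ A * (K' * m * (C - K' * ‖x‖ ^ s) ^ (m - 1)) := by
      rw [show t ^ A * (-(K' * 1) * m * (C - K' * ‖x‖ ^ s) ^ (m - 1))
          = -(t ^ A * (K' * m * (C - K' * ‖x‖ ^ s) ^ (m - 1))) by ring, norm_neg,
        Real.norm_of_nonneg (mul_nonneg htA.le (mul_nonneg (mul_nonneg hK'0.le hm0.le)
          (Real.rpow_nonneg hval0.le _)))]
    have habs2 : ‖s * ‖x‖ ^ (s - 2)‖ = s * ‖x‖ ^ (s - 2) :=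
      Real.norm_of_nonneg (mul_nonneg hs0.le (Real.rpow_nonneg (norm_nonneg x) _))
    rw [habs1, habs2]
    refine Real.rpow_le_rpow (by positivity) ?_ hq.le
    have hEq : c3 * t ^ (A - b) =
        t ^ A * (K' * m * (C / 2) ^ (m - 1)) * (s * R2 ^ (s - 2) * R1) := by
      rw [hK'def, hR2def, hR1def, Real.mul_rpow hr0.le htb.le, ← Real.rpow_mul ht0.le]
      have htpow : t ^ A / t ^ (b * s) * t ^ (b * (s - 2)) * t ^ b = t ^ (A - b) := by
        rw [div_eq_mul_inv, ← Real.rpow_neg ht0.le, ← Real.rpow_add ht0, ← Real.rpow_add ht0,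
          ← Real.rpow_add ht0]
        congr 1; ring
      rw [← htpow, hc3def]
      ring
    refine le_trans (le_of_eq hEq) ?_
    have h1 : (C / 2) ^ (m - 1) ≤ (C - K' * ‖x‖ ^ s) ^ (m - 1) :=
      Real.rpow_le_rpow (half_pos hC).le hval (by linarith)
    have h2 : R2 ^ (s - 2) ≤ ‖x‖ ^ (s - 2) :=
      Real.rpow_le_rpow_of_nonpos hx0 hx2.le (by linarith)
    have hb1 : K' * m * (C / 2) ^ (m - 1) ≤ K' * m * (C - K' * ‖x‖ ^ s) ^ (m - 1) :=
      mul_le_mul_of_nonneg_left h1 (mul_nonneg hK'0.le hm0.le)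
    have hb2 : s * R2 ^ (s - 2) * R1 ≤ s * ‖x‖ ^ (s - 2) * ‖x‖ :=
      mul_le_mul (mul_le_mul_of_nonneg_left h2 hs0.le) hx1.le hR10.le
        (mul_nonneg hs0.le (Real.rpow_nonneg (norm_nonneg x) _))
    exact mul_le_mul (mul_le_mul_of_nonneg_left hb1 htA.le) hb2
      (by positivity) (by positivity)
  -- volume lower bound
  have hvol : ENNReal.ofReal (c4 * t ^ (b * (n : ℝ))) * W ≤ volume S := by
    have h1 : volume (Metric.ball (0 : EuclideanSpace ℝ (Fin n)) R2)
        = ENNReal.ofReal (R2 ^ n) * W := by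
      rw [Measure.addHaar_ball volume _ hR20.le, finrank_euclideanSpace_fin]
    have h2 : volume (Metric.closedBall (0 : EuclideanSpace ℝ (Fin n)) R1)
        = ENNReal.ofReal (R1 ^ n) * W := by
      rw [Measure.addHaar_closedBall volume _ hR10.le, finrank_euclideanSpace_fin]
    have h3 : volume (Metric.ball (0 : EuclideanSpace ℝ (Fin n)) R2)
        - volume (Metric.closedBall (0 : EuclideanSpace ℝ (Fin n)) R1) ≤ volume S :=
      le_measure_diff
    refine le_trans (le_of_eq ?_) h3
    rw [h1, h2, ← ENNReal.sub_mul (fun _ _ => hWtop),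
      ← ENNReal.ofReal_sub _ (by positivity)]
    congr 2
    rw [hR2def, hR1def, mul_pow, mul_pow, ← Real.rpow_natCast (t ^ b) n,
      ← Real.rpow_mul ht0.le, hc4def]
    ring
  have hA := aux_inner volume hSm hlow
  calc ENNReal.ofReal (c3 ^ q * c4 * t ^ ((A - b) * q + b * (n : ℝ))) * W
      = ENNReal.ofReal ((c3 * t ^ (A - b)) ^ q) *
          (ENNReal.ofReal (c4 * t ^ (b * (n : ℝ))) * W) := by
        rw [← mul_assoc, ← ENNReal.ofReal_mul (by positivity)]
        congr 2
        rw [Real.mul_rpow hc30.le (Real.rpow_nonneg ht0.le _), ← Real.rpow_mul ht0.le,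
          Real.rpow_add ht0]
        ring
    _ ≤ ENNReal.ofReal ((c3 * t ^ (A - b)) ^ q) * volume S := mul_le_mul_right hvol _
    _ ≤ _ := hA

end AuxLemmas

/-- The Barenblatt solution of the `p`-parabolic equation with constant `C`:
`B_p(x,t) = t^{-n/λ} (C - ((p-2)/2) λ^{1/(1-p)} (|x| t^{-1/λ})^{p/(p-1)})_+^{(p-1)/(p-2)}`,
where `λ = n(p-2)+p`. -/
noncomputable def barenblatt (n : ℕ) (p C : ℝ) (x : EuclideanSpace ℝ (Fin n)) (t : ℝ) : ℝ :=
  t ^ (-(n : ℝ) / ((n : ℝ) * (p - 2) + p)) *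
    (max (C - (p - 2) / 2 * ((n : ℝ) * (p - 2) + p) ^ (1 / (1 - p)) *
      (‖x‖ / t ^ (1 / ((n : ℝ) * (p - 2) + p))) ^ (p / (p - 1))) 0) ^ ((p - 1) / (p - 2))

/-- Sharpness of the integrability exponents: for every `q ≥ p − 1 + p/n` the integral
`∫_0^T ∫_{ℝⁿ} B_p^q dx dt` is infinite, and for every `q ≥ p − 1 + 1/(n+1)` the integral
`∫_0^T ∫_{ℝⁿ} |∇_x B_p|^q dx dt` is infinite. -/
theorem barenblatt_exponents_sharp (n : ℕ) (hn : 1 ≤ n) (p : ℝ) (hp : 2 < p)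
    (C : ℝ) (hC : 0 < C) (T : ℝ) (hT : 0 < T) :
    (∀ q : ℝ, p - 1 + p / n ≤ q →
      ∫⁻ t in Set.Ioo (0 : ℝ) T, ∫⁻ x,
        ENNReal.ofReal (barenblatt n p C x t ^ q) = ⊤) ∧
    (∀ q : ℝ, p - 1 + 1 / (n + 1) ≤ q →
      ∫⁻ t in Set.Ioo (0 : ℝ) T, ∫⁻ x,
        ENNReal.ofReal (‖gradient (fun y => barenblatt n p C y t) x‖ ^ q) = ⊤) := by
  have hn0 : (0:ℝ) < n := by exact_mod_cast hn
  have hL0 : (0:ℝ) < (n : ℝ) * (p - 2) + p := by nlinarith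
  have hK0 : 0 < (p - 2) / 2 * ((n : ℝ) * (p - 2) + p) ^ (1 / (1 - p)) :=
    mul_pos (by linarith) (Real.rpow_pos_of_pos hL0 _)
  have hs1 : 1 < p / (p - 1) := (one_lt_div (by linarith)).2 (by linarith)
  have hs2 : p / (p - 1) ≤ 2 := by rw [div_le_iff₀ (by linarith)]; linarith
  have hm1 : 1 < (p - 1) / (p - 2) := (one_lt_div (by linarith)).2 (by linarith)
  constructor
  · intro q hq
    have hq0 : 0 < q := by
      have h := div_pos (by linarith : (0:ℝ) < p) hn0
      linarith
    have he : -(n : ℝ) / ((n : ℝ) * (p - 2) + p) * q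
        + 1 / ((n : ℝ) * (p - 2) + p) * (n : ℝ) ≤ -1 := by
      have h1 : (n : ℝ) * (p - 1 + p / (n : ℝ)) ≤ (n : ℝ) * q :=
        mul_le_mul_of_nonneg_left hq hn0.le
      have h3 : (n : ℝ) * (p / (n : ℝ)) = p := by field_simp
      have h1' : (n : ℝ) * (p - 1) + p ≤ (n : ℝ) * q := by
        rw [mul_add, h3] at h1; linarith
      rw [show -(n : ℝ) / ((n : ℝ) * (p - 2) + p) * q
          + 1 / ((n : ℝ) * (p - 2) + p) * (n : ℝ)
          = (-(n : ℝ) * q + (n : ℝ)) / ((n : ℝ) * (p - 2) + p) by ring,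
        div_le_iff₀ hL0]
      nlinarith
    simp only [barenblatt]
    exact aux_part1 n hn hC hT hK0 (by linarith) (by linarith) hq0 he
  · intro q hq
    have hq0 : 0 < q := by
      have h : (0:ℝ) < 1 / ((n : ℝ) + 1) := by positivity
      linarith
    have he : (-(n : ℝ) / ((n : ℝ) * (p - 2) + p) - 1 / ((n : ℝ) * (p - 2) + p)) * q
        + 1 / ((n : ℝ) * (p - 2) + p) * (n : ℝ) ≤ -1 := by
      have h1 : ((n : ℝ) + 1) * (p - 1 + 1 / ((n : ℝ) + 1)) ≤ ((n : ℝ) + 1) * q :=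
        mul_le_mul_of_nonneg_left hq (by positivity)
      have h3 : ((n : ℝ) + 1) * (1 / ((n : ℝ) + 1)) = 1 := by field_simp
      have h1' : ((n : ℝ) + 1) * (p - 1) + 1 ≤ ((n : ℝ) + 1) * q := by
        rw [mul_add, h3] at h1; linarith
      rw [show (-(n : ℝ) / ((n : ℝ) * (p - 2) + p) - 1 / ((n : ℝ) * (p - 2) + p)) * q
          + 1 / ((n : ℝ) * (p - 2) + p) * (n : ℝ)
          = (-((n : ℝ) + 1) * q + (n : ℝ)) / ((n : ℝ) * (p - 2) + p) by ring,
        div_le_iff₀ hL0]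
      nlinarith
    simp only [barenblatt]
    exact aux_part2 n hn hC hT hK0 hs1 hs2 hm1 hq0 he
end
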